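/- Let N ≥ 1, M > 0, x, y ∈ ℝ^N with all components in [0, M], let 0 < δ < M, let F : K_x → K_y satisfy |d²(p,q) − d²(F(p), F(q))| ≤ 2δ for all p, q ∈ K_x, and let σ : {1,…,N} → {1,…,N} satisfy F(□(n)) ⊆ □(σ(n)) for all n. Then σ is injective (hence bijective). -/

import Mathlib

noncomputable def box (M : ℝ) (n : ℕ) : Set (ℝ × ℝ) :=
  Set.Icc (4 * M + 10 * M * (n : ℝ)) (4 * M + 10 * M * (n : ℝ) + 2 * M) ×ˢ Set.Icc (-M) M

noncomputable def pp {N : ℕ} (M : ℝ) (z : Fin N → ℝ) (n : Fin N) : ℝ × ℝ :=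
  (10 * M * ((n : ℕ) : ℝ), z n)

noncomputable def pm {N : ℕ} (M : ℝ) (z : Fin N → ℝ) (n : Fin N) : ℝ × ℝ :=
  (10 * M * ((n : ℕ) : ℝ), -(z n))

noncomputable def Kset {N : ℕ} (M : ℝ) (z : Fin N → ℝ) : Set (ℝ × ℝ) :=
  ⋃ n : Fin N, ({pp M z n, pm M z n} ∪ box M n)

theorem pp_mem {N : ℕ} (M : ℝ) (z : Fin N → ℝ) (n : Fin N) : pp M z n ∈ Kset M z :=
  Set.mem_iUnion.mpr ⟨n, Or.inl (Set.mem_insert _ _)⟩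

theorem pm_mem {N : ℕ} (M : ℝ) (z : Fin N → ℝ) (n : Fin N) : pm M z n ∈ Kset M z :=
  Set.mem_iUnion.mpr ⟨n, Or.inl (Set.mem_insert_of_mem _ rfl)⟩

theorem Kset_compact {N : ℕ} (M : ℝ) (z : Fin N → ℝ) : IsCompact (Kset M z) := by
  apply isCompact_iUnion
  intro n
  exact ((Set.toFinite _).isCompact).union (isCompact_Icc.prod isCompact_Icc)

instance {N : ℕ} (M : ℝ) (z : Fin N → ℝ) : CompactSpace ↥(Kset M z) :=
  isCompact_iff_compactSpace.mp (Kset_compact M z)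

theorem Kset_nonempty {N : ℕ} (hN : 0 < N) (M : ℝ) (z : Fin N → ℝ) : (Kset M z).Nonempty :=
  ⟨pp M z ⟨0, hN⟩, pp_mem M z ⟨0, hN⟩⟩

theorem box_subset_Kset {N : ℕ} (M : ℝ) (z : Fin N → ℝ) (n : Fin N) :
    box M n ⊆ Kset M z := fun p hp =>
  Set.mem_iUnion.mpr ⟨n, Or.inr hp⟩

theorem dist_in_box {M : ℝ} (hM : 0 < M) {k : ℕ} {a b : ℝ × ℝ}
    (ha : a ∈ box M k) (hb : b ∈ box M k) : dist a b ≤ 2 * M := by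
  rw [Prod.dist_eq]
  refine max_le ?_ ?_
  · have := Real.dist_le_of_mem_Icc ha.1 hb.1
    linarith
  · have := Real.dist_le_of_mem_Icc ha.2 hb.2
    linarith

/-- Step 2: the square-index map σ is injective (hence bijective). -/
theorem step2_sigma_injective {N : ℕ} (hN : 0 < N) {M : ℝ} (hM : 0 < M)
    (x y : Fin N → ℝ) (hx : ∀ n, x n ∈ Set.Icc (0 : ℝ) M) (hy : ∀ n, y n ∈ Set.Icc (0 : ℝ) M)
    {δ : ℝ} (hδ0 : 0 < δ) (hδM : δ < M)
    (F : ↥(Kset M x) → ↥(Kset M y))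
    (hF : ∀ p q : ↥(Kset M x), |dist p q - dist (F p) (F q)| ≤ 2 * δ)
    (σ : Fin N → Fin N)
    (hσ : ∀ n : Fin N, ∀ p : ↥(Kset M x),
      (p : ℝ × ℝ) ∈ box M n → (F p : ℝ × ℝ) ∈ box M (σ n)) :
    Function.Injective σ := by
  intro n m hnm
  by_contra hne
  set p : ℝ × ℝ := (4 * M + 10 * M * ((n : ℕ) : ℝ), 0) with hp
  set q : ℝ × ℝ := (4 * M + 10 * M * ((m : ℕ) : ℝ), 0) with hq
  have hpbox : p ∈ box M n := by
    constructor
    · constructor <;> simp [hp] <;> nlinarith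
    · constructor <;> simp [hp] <;> nlinarith
  have hqbox : q ∈ box M m := by
    constructor
    · constructor <;> simp [hq] <;> nlinarith
    · constructor <;> simp [hq] <;> nlinarith
  set P : ↥(Kset M x) := ⟨p, box_subset_Kset M x n hpbox⟩
  set Q : ↥(Kset M x) := ⟨q, box_subset_Kset M x m hqbox⟩
  have hFP : (F P : ℝ × ℝ) ∈ box M (σ n) := hσ n P hpbox
  have hFQ : (F Q : ℝ × ℝ) ∈ box M (σ n) := by
    rw [hnm]; exact hσ m Q hqbox
  have hFd : dist (F P) (F Q) ≤ 2 * M := by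
    rw [Subtype.dist_eq]
    exact dist_in_box hM hFP hFQ
  have hd : dist P Q = 10 * M * |((n : ℕ) : ℝ) - ((m : ℕ) : ℝ)| := by
    rw [Subtype.dist_eq, Prod.dist_eq]
    simp [P, Q, hp, hq, Real.dist_eq]
    rw [show 10 * M * ((n : ℕ) : ℝ) - 10 * M * ((m : ℕ) : ℝ)
        = 10 * M * (((n : ℕ) : ℝ) - ((m : ℕ) : ℝ)) by ring, abs_mul]
    rw [abs_of_pos (by linarith : (0:ℝ) < 10 * M)]
  have hge : (1 : ℝ) ≤ |((n : ℕ) : ℝ) - ((m : ℕ) : ℝ)| := by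
    have hv : (n : ℕ) ≠ (m : ℕ) := fun h => hne (Fin.ext h)
    have h1 : (1 : ℤ) ≤ |((n : ℕ) : ℤ) - ((m : ℕ) : ℤ)| :=
      Int.one_le_abs (by omega)
    calc (1:ℝ) ≤ ((|((n : ℕ) : ℤ) - ((m : ℕ) : ℤ)| : ℤ) : ℝ) := by exact_mod_cast h1
      _ = _ := by push_cast [Int.cast_abs]; ring_nf
  have := hF P Q
  rw [abs_le] at this
  nlinarith [this.1, this.2]
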